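/- For every nonnegative integer m, one has |c_{2m}| ≤ (6√2/π^{3/2}) · sinh(π/6) · (√(2m+1)/(√24)^{2m}) · √(1 + 1/(4m+1)). -/

import Mathlib

open Real Finset Filter Topology

noncomputable def c (m : ℕ) : ℝ :=
  ((-1 : ℝ) ^ m / (4 * Real.sqrt 6) ^ m) *
    ∑ k ∈ Finset.range ((m + 1) / 2 + 1),
      ((m + 1).choose k : ℝ) * ((m + 1 - k : ℕ) : ℝ) / ((m + 1 - 2 * k).factorial : ℝ) *
        (π / 6) ^ ((m : ℤ) - 2 * k)


noncomputable def stmt9_f (m : ℕ) : ℝ := (Nat.centralBinom m : ℝ) * Real.sqrt (4 * m + 1) / 4 ^ m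

lemma stmt9_f_mono : Monotone stmt9_f := by
  apply monotone_nat_of_le_succ
  intro m
  have hrec : ((m + 1 : ℕ) : ℝ) * (Nat.centralBinom (m+1) : ℝ)
      = 2 * (2 * m + 1) * (Nat.centralBinom m : ℝ) := by
    exact_mod_cast congrArg (Nat.cast (R := ℝ)) (Nat.succ_mul_centralBinom_succ m)
  have hm1 : (0:ℝ) < (m:ℝ) + 1 := by positivity
  have hcb : (0:ℝ) < (Nat.centralBinom m : ℝ) := by exact_mod_cast Nat.centralBinom_pos m
  have hkey : 2 * ((m:ℝ) + 1) * Real.sqrt (4 * m + 1) ≤ (2 * m + 1) * Real.sqrt (4 * m + 5) := by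
    rw [show 2 * ((m:ℝ) + 1) * Real.sqrt (4 * m + 1)
        = Real.sqrt ((2 * ((m:ℝ)+1))^2 * (4 * m + 1)) by
      rw [Real.sqrt_mul (by positivity), Real.sqrt_sq (by positivity)],
      show (2 * (m:ℝ) + 1) * Real.sqrt (4 * m + 5)
        = Real.sqrt ((2 * (m:ℝ) + 1)^2 * (4 * m + 5)) by
      rw [Real.sqrt_mul (by positivity), Real.sqrt_sq (by positivity)]]
    apply Real.sqrt_le_sqrt
    nlinarith [sq_nonneg ((m:ℝ))]
  have hcb1 : (Nat.centralBinom (m+1) : ℝ) = 2 * (2 * m + 1) * (Nat.centralBinom m : ℝ) / ((m:ℝ)+1) := by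
    field_simp at hrec ⊢
    push_cast at hrec ⊢
    linarith [hrec]
  unfold stmt9_f
  rw [hcb1]
  rw [div_le_div_iff₀ (by positivity) (by positivity)]
  push_cast
  have h45 : ((4:ℝ) * (m+1) + 1) = 4 * m + 5 := by ring
  rw [h45]
  have hs1 : (0:ℝ) ≤ Real.sqrt (4 * m + 1) := Real.sqrt_nonneg _
  have hs5 : (0:ℝ) ≤ Real.sqrt (4 * m + 5) := Real.sqrt_nonneg _
  rw [show 2 * (2 * (m:ℝ) + 1) * (Nat.centralBinom m : ℝ) / ((m:ℝ)+1) * Real.sqrt (4 * ↑m + 5) * 4 ^ m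
      = (2 * (2 * (m:ℝ) + 1) * (Nat.centralBinom m : ℝ) * Real.sqrt (4 * ↑m + 5) * 4 ^ m) / ((m:ℝ)+1)
      by ring, le_div_iff₀ hm1]
  have h4 : (0:ℝ) < 4 ^ m := by positivity
  have := mul_le_mul_of_nonneg_left hkey (le_of_lt hcb)
  rw [show (4:ℝ)^(m+1) = 4 * 4^m by ring]
  nlinarith [this, h4]

lemma stmt9_f_le (m : ℕ) : stmt9_f m ≤ 2 / Real.sqrt π := by
  have hWt := Real.Wallis.tendsto_W_nhds_pi_div_two
  have hfsq : ∀ m : ℕ, stmt9_f m = Real.sqrt ((4 * m + 1) / ((2 * m + 1) * Real.Wallis.W m)) := by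
    intro m
    have hw := Real.Wallis.W_eq_factorial_ratio m
    have hf1 : (0:ℝ) < (m.factorial : ℝ) := by exact_mod_cast m.factorial_pos
    have hf2 : (0:ℝ) < ((2*m).factorial : ℝ) := by exact_mod_cast (2*m).factorial_pos
    have hcb : (Nat.centralBinom m : ℝ) = ((2*m).factorial : ℝ) / ((m.factorial : ℝ))^2 := by
      rw [Nat.centralBinom, Nat.cast_choose ℝ (by omega)]
      rw [show 2*m - m = m by omega, sq]
    have hfn : (0:ℝ) ≤ stmt9_f m := by unfold stmt9_f; positivity
    rw [show (4 * (m:ℝ) + 1) / ((2 * m + 1) * Real.Wallis.W m) = (stmt9_f m)^2 from ?_,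
      Real.sqrt_sq hfn]
    unfold stmt9_f
    rw [div_pow, mul_pow, Real.sq_sqrt (by positivity), hcb, hw]
    rw [show (2:ℝ)^(4*m) = ((4:ℝ)^m)^2 by
      rw [show (4:ℝ) = 2^2 by norm_num, ← pow_mul, ← pow_mul]; ring_nf]
    field_simp
  have hg : Tendsto (fun m : ℕ => (4 * (m:ℝ) + 1) / ((2 * m + 1) * Real.Wallis.W m))
      atTop (𝓝 (4 / π)) := by
    have hatop : Tendsto (fun m : ℕ => 2*(m:ℝ)+1) atTop atTop := by
      apply tendsto_atTop_add_const_right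
      exact (tendsto_natCast_atTop_atTop (R := ℝ)).const_mul_atTop two_pos
    have h0 : Tendsto (fun m : ℕ => (2*(m:ℝ)+1)⁻¹) atTop (𝓝 0) :=
      tendsto_inv_atTop_zero.comp hatop
    have h1 : Tendsto (fun m : ℕ => (4 * (m:ℝ) + 1) / (2 * m + 1)) atTop (𝓝 2) := by
      have heq : ∀ m : ℕ, (4 * (m:ℝ) + 1) / (2 * m + 1) = 2 - (2*(m:ℝ)+1)⁻¹ := by
        intro m
        have : (2*(m:ℝ)+1) ≠ 0 := by positivity
        field_simp
        ring
      simp_rw [heq]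
      simpa using tendsto_const_nhds.sub h0
    have h2 : Tendsto (fun m : ℕ => (Real.Wallis.W m)⁻¹) atTop (𝓝 (π/2)⁻¹) :=
      hWt.inv₀ (by positivity)
    have := h1.mul h2
    have hpi : (2:ℝ) * (π/2)⁻¹ = 4 / π := by
      rw [inv_div]; ring
    rw [hpi] at this
    convert this using 2 with m
    rw [mul_comm ((2:ℝ)*m+1) _, ← div_div, div_eq_mul_inv _ (Real.Wallis.W m)]
    ring
  have hft : Tendsto stmt9_f atTop (𝓝 (2 / Real.sqrt π)) := by
    have := hg.sqrt
    rw [show Real.sqrt (4/π) = 2 / Real.sqrt π by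
      rw [Real.sqrt_div (by norm_num : (0:ℝ) ≤ 4),
        show Real.sqrt 4 = 2 by
          rw [show (4:ℝ) = 2^2 by norm_num, Real.sqrt_sq]; norm_num]] at this
    simp_rw [← hfsq] at this
    exact this
  exact stmt9_f_mono.ge_of_tendsto hft m

lemma key_nat (m k : ℕ) : (2*m+1).choose k * (2*m+1-k) = (2*m+1) * (2*m).choose k := by
  have h1 := Nat.choose_succ_right_eq (2*m+1) k
  have h2 := Nat.add_one_mul_choose_eq (2*m) k
  omega

lemma sinh_partial (x : ℝ) (hx : 0 ≤ x) (n : ℕ) :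
    ∑ j ∈ Finset.range n, x^(2*j+1)/((2*j+1).factorial : ℝ) ≤ Real.sinh x :=
  sum_le_hasSum _ (fun i _ => by positivity) (Real.hasSum_sinh x)

lemma hc_eq (m : ℕ) : c (2*m) = (1/(96:ℝ)^m) * ∑ k ∈ Finset.range (m+1),
    (((2*m+1) * Nat.choose (2*m) k : ℕ) : ℝ) / (((2*(m-k)+1).factorial : ℕ) : ℝ)
      * (π/6)^(2*(m-k)) := by
  unfold c
  have hidx : (2*m+1)/2 + 1 = m + 1 := by omega
  have hsgn : ((-1:ℝ))^(2*m) = 1 := by rw [pow_mul]; norm_num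
  have hbase : ((4:ℝ) * Real.sqrt 6)^(2*m) = 96^m := by
    rw [pow_mul]
    congr 1
    rw [mul_pow, Real.sq_sqrt (by norm_num : (0:ℝ) ≤ 6)]
    norm_num
  rw [hidx, hsgn, hbase]
  congr 1
  apply Finset.sum_congr rfl
  intro k hk
  have hk' : k ≤ m := by have := Finset.mem_range.mp hk; omega
  have e2 : 2*m+1 - 2*k = 2*(m-k)+1 := by omega
  have e3 : ((2*m : ℕ) : ℤ) - 2*(k:ℤ) = ((2*(m-k) : ℕ) : ℤ) := by push_cast; omega
  rw [e2, e3, zpow_natCast, ← Nat.cast_mul, key_nat]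

theorem stmt9 (m : ℕ) :
    |c (2 * m)| ≤ 6 * Real.sqrt 2 / π ^ ((3 : ℝ) / 2) * Real.sinh (π / 6) *
      (Real.sqrt (2 * m + 1) / Real.sqrt 24 ^ (2 * m)) *
        Real.sqrt (1 + 1 / (4 * m + 1)) := by
  have hx : (0:ℝ) < π/6 := by positivity
  have hcbpos : (0:ℝ) < (Nat.centralBinom m : ℝ) := by exact_mod_cast Nat.centralBinom_pos m
  have hsinh : (0:ℝ) < Real.sinh (π/6) := Real.sinh_pos_iff.mpr hx
  have h96 : (0:ℝ) < (96:ℝ)^m := by positivity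
  -- central binomial bound
  have hcb_le : (Nat.centralBinom m : ℝ) ≤ 2 * 4^m / (Real.sqrt π * Real.sqrt (4*m+1)) := by
    have hle := stmt9_f_le m
    unfold stmt9_f at hle
    have h4 : (0:ℝ) < 4^m := by positivity
    have hsp : (0:ℝ) < Real.sqrt π := Real.sqrt_pos.mpr pi_pos
    have hs41 : (0:ℝ) < Real.sqrt (4*(m:ℝ)+1) := Real.sqrt_pos.mpr (by positivity)
    rw [le_div_iff₀ (by positivity)]
    calc (Nat.centralBinom m : ℝ) * (Real.sqrt π * Real.sqrt (4*(m:ℝ)+1))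
        = ((Nat.centralBinom m : ℝ) * Real.sqrt (4*(m:ℝ)+1) / 4^m) * (Real.sqrt π * 4^m) := by
          field_simp
      _ ≤ (2 / Real.sqrt π) * (Real.sqrt π * 4^m) := by
          apply mul_le_mul_of_nonneg_right hle (by positivity)
      _ = 2 * 4^m := by field_simp
  -- sum bound
  have h1 : ∑ k ∈ Finset.range (m+1),
      (((2*m+1) * Nat.choose (2*m) k : ℕ) : ℝ) / (((2*(m-k)+1).factorial : ℕ) : ℝ)
        * (π/6)^(2*(m-k))
      ≤ ∑ k ∈ Finset.range (m+1), ((2*(m:ℝ)+1) * (Nat.centralBinom m : ℝ))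
        * ((π/6)^(2*(m-k)) / (((2*(m-k)+1).factorial : ℕ) : ℝ)) := by
    apply Finset.sum_le_sum
    intro k _
    have hch : ((2*m).choose k : ℝ) ≤ (Nat.centralBinom m : ℝ) := by
      exact_mod_cast Nat.choose_le_centralBinom k m
    have hnum : (((2*m+1) * Nat.choose (2*m) k : ℕ) : ℝ) ≤ (2*(m:ℝ)+1) * (Nat.centralBinom m : ℝ) := by
      push_cast
      apply mul_le_mul_of_nonneg_left hch (by positivity)
    calc (((2*m+1) * Nat.choose (2*m) k : ℕ) : ℝ) / (((2*(m-k)+1).factorial : ℕ) : ℝ)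
          * (π/6)^(2*(m-k))
        = (((2*m+1) * Nat.choose (2*m) k : ℕ) : ℝ)
          * ((π/6)^(2*(m-k)) / (((2*(m-k)+1).factorial : ℕ) : ℝ)) := by ring
      _ ≤ _ := mul_le_mul_of_nonneg_right hnum (by positivity)
  have h2 : ∑ k ∈ Finset.range (m+1), (π/6)^(2*(m-k)) / (((2*(m-k)+1).factorial : ℕ) : ℝ)
      = ∑ j ∈ Finset.range (m+1), (π/6)^(2*j) / (((2*j+1).factorial : ℕ) : ℝ) := by
    rw [← Finset.sum_range_reflect (fun j => (π/6)^(2*j) / (((2*j+1).factorial : ℕ) : ℝ)) (m+1)]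
    simp only [Nat.add_sub_cancel]
  have h3 : ∑ j ∈ Finset.range (m+1), (π/6)^(2*j) / (((2*j+1).factorial : ℕ) : ℝ)
      ≤ Real.sinh (π/6) / (π/6) := by
    rw [le_div_iff₀ hx, Finset.sum_mul]
    calc ∑ j ∈ Finset.range (m+1), (π/6)^(2*j) / (((2*j+1).factorial : ℕ) : ℝ) * (π/6)
        = ∑ j ∈ Finset.range (m+1), (π/6)^(2*j+1) / (((2*j+1).factorial : ℕ) : ℝ) := by
          apply Finset.sum_congr rfl
          intro j _
          rw [div_mul_eq_mul_div, ← pow_succ]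
      _ ≤ Real.sinh (π/6) := sinh_partial _ hx.le _
  -- assemble sum bound
  have hSle : ∑ k ∈ Finset.range (m+1),
      (((2*m+1) * Nat.choose (2*m) k : ℕ) : ℝ) / (((2*(m-k)+1).factorial : ℕ) : ℝ)
        * (π/6)^(2*(m-k))
      ≤ (2*(m:ℝ)+1) * (Nat.centralBinom m : ℝ) * (Real.sinh (π/6) / (π/6)) := by
    refine h1.trans ?_
    rw [← Finset.mul_sum, h2]
    exact mul_le_mul_of_nonneg_left h3 (by positivity)
  -- rewrite RHS
  have hprod : Real.sqrt (2*(m:ℝ)+1) * Real.sqrt (1 + 1/(4*(m:ℝ)+1))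
      = Real.sqrt 2 * (2*(m:ℝ)+1) / Real.sqrt (4*(m:ℝ)+1) := by
    rw [← Real.sqrt_mul (by positivity)]
    rw [show (2*(m:ℝ)+1) * (1 + 1/(4*(m:ℝ)+1)) = 2 * (2*(m:ℝ)+1)^2 / (4*(m:ℝ)+1) by
      field_simp; ring]
    rw [Real.sqrt_div (by positivity), Real.sqrt_mul (by norm_num : (0:ℝ) ≤ 2),
      Real.sqrt_sq (by positivity)]
  have h32 : π ^ ((3:ℝ)/2) = π * Real.sqrt π := by
    rw [show (3:ℝ)/2 = 1 + 1/2 by norm_num, Real.rpow_add pi_pos, Real.rpow_one,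
      Real.sqrt_eq_rpow]
  have h24 : Real.sqrt 24 ^ (2*m) = (24:ℝ)^m := by
    rw [pow_mul, Real.sq_sqrt (by norm_num : (0:ℝ) ≤ 24)]
  have hrhs : 6 * Real.sqrt 2 / π ^ ((3 : ℝ) / 2) * Real.sinh (π / 6) *
      (Real.sqrt (2 * m + 1) / Real.sqrt 24 ^ (2 * m)) * Real.sqrt (1 + 1 / (4 * m + 1))
      = 12 * (2*(m:ℝ)+1) * Real.sinh (π/6) / (π * Real.sqrt π * Real.sqrt (4*(m:ℝ)+1) * 24^m) := by
    rw [h32, h24]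
    rw [show 6 * Real.sqrt 2 / (π * Real.sqrt π) * Real.sinh (π / 6) *
        (Real.sqrt (2 * m + 1) / (24:ℝ)^m) * Real.sqrt (1 + 1 / (4 * m + 1))
      = (6 * Real.sinh (π/6) / (π * Real.sqrt π * 24^m)) *
        (Real.sqrt 2 * (Real.sqrt (2*(m:ℝ)+1) * Real.sqrt (1 + 1/(4*(m:ℝ)+1)))) by ring]
    rw [hprod]
    rw [show Real.sqrt 2 * (Real.sqrt 2 * (2*(m:ℝ)+1) / Real.sqrt (4*(m:ℝ)+1))
      = (Real.sqrt 2 * Real.sqrt 2) * (2*(m:ℝ)+1) / Real.sqrt (4*(m:ℝ)+1) by ring,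
      Real.mul_self_sqrt (by norm_num : (0:ℝ) ≤ 2)]
    have hs41 : (0:ℝ) < Real.sqrt (4*(m:ℝ)+1) := Real.sqrt_pos.mpr (by positivity)
    have hsp : (0:ℝ) < Real.sqrt π := Real.sqrt_pos.mpr pi_pos
    field_simp
    ring
  -- final chain
  rw [hrhs, hc_eq m, abs_of_nonneg (by positivity)]
  have hfinal : (1/(96:ℝ)^m) * ((2*(m:ℝ)+1) * (Nat.centralBinom m : ℝ) * (Real.sinh (π/6) / (π/6)))
      ≤ 12 * (2*(m:ℝ)+1) * Real.sinh (π/6) / (π * Real.sqrt π * Real.sqrt (4*(m:ℝ)+1) * 24^m) := by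
    have hs41 : (0:ℝ) < Real.sqrt (4*(m:ℝ)+1) := Real.sqrt_pos.mpr (by positivity)
    have hsp : (0:ℝ) < Real.sqrt π := Real.sqrt_pos.mpr pi_pos
    have h9624 : (96:ℝ)^m = 4^m * 24^m := by rw [← mul_pow]; norm_num
    calc (1/(96:ℝ)^m) * ((2*(m:ℝ)+1) * (Nat.centralBinom m : ℝ) * (Real.sinh (π/6) / (π/6)))
        = (6 * (2*(m:ℝ)+1) * Real.sinh (π/6) / (π * 96^m)) * (Nat.centralBinom m : ℝ) := by
          field_simp
      _ ≤ (6 * (2*(m:ℝ)+1) * Real.sinh (π/6) / (π * 96^m))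
            * (2 * 4^m / (Real.sqrt π * Real.sqrt (4*(m:ℝ)+1))) := by
          apply mul_le_mul_of_nonneg_left hcb_le (by positivity)
      _ = 12 * (2*(m:ℝ)+1) * Real.sinh (π/6) / (π * Real.sqrt π * Real.sqrt (4*(m:ℝ)+1) * 24^m) := by
          rw [h9624]
          have h4 : (0:ℝ) < (4:ℝ)^m := by positivity
          have h24p : (0:ℝ) < (24:ℝ)^m := by positivity
          field_simp
          ring
  calc (1/(96:ℝ)^m) * ∑ k ∈ Finset.range (m+1),
      (((2*m+1) * Nat.choose (2*m) k : ℕ) : ℝ) / (((2*(m-k)+1).factorial : ℕ) : ℝ)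
        * (π/6)^(2*(m-k))
      ≤ (1/(96:ℝ)^m) * ((2*(m:ℝ)+1) * (Nat.centralBinom m : ℝ) * (Real.sinh (π/6) / (π/6))) :=
        mul_le_mul_of_nonneg_left hSle (by positivity)
    _ ≤ _ := hfinal
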